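/- arXiv:2205.03437 — 3 statements merged into one kernel-verified Lean document; each statement's English description precedes it below -/
import Mathlib

section
/- There is a constant C > 0 such that for every real R ≥ 1, every finite set B ⊂ ℝ³ in convex position whose pairwise Euclidean distances are all at least 1 and which is contained in a closed ball of radius R satisfies |B| ≤ C·R². -/
def ConvexPos {d : ℕ} (B : Set (EuclideanSpace ℝ (Fin d))) : Prop :=
  ∀ x ∈ B, x ∉ convexHull ℝ (B \ {x})

open Metric MeasureTheory Set
open scoped RealInnerProductSpace ENNReal

noncomputable section

local notation "E" => EuclideanSpace ℝ (Fin 3)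

lemma sphere_packing (c : E) (R : ℝ) (hR : 1 ≤ R) (s : Finset E)
    (hs : ∀ x ∈ s, dist x c = R)
    (hsep : ∀ x ∈ s, ∀ y ∈ s, x ≠ y → 1 ≤ dist x y) :
    (s.card : ℝ) ≤ 26 * R ^ 2 := by
  set κ := volume (ball (0 : E) 1) with hκ
  have hκ0 : κ ≠ 0 := (measure_ball_pos volume 0 one_pos).ne'
  have hκt : κ ≠ ⊤ := measure_ball_lt_top.ne
  have hfr : Module.finrank ℝ E = 3 := by simp [finrank_euclideanSpace]
  have hball : ∀ (x : E) (r : ℝ), 0 ≤ r →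
      volume (ball x r) = ENNReal.ofReal (r ^ 3) * κ := by
    intro x r hr
    rw [Measure.addHaar_ball volume x hr, hfr]
  have hcball : ∀ (x : E) (r : ℝ), 0 ≤ r →
      volume (closedBall x r) = ENNReal.ofReal (r ^ 3) * κ := by
    intro x r hr
    rw [Measure.addHaar_closedBall_eq_addHaar_ball, hball x r hr]
  -- small balls are pairwise disjoint
  have hdisj : (s : Set E).PairwiseDisjoint (fun x => ball x (1/2 : ℝ)) := by
    intro x hx y hy hxy
    apply Set.disjoint_left.2
    intro z hz1 hz2
    have h1 : dist x y ≤ dist z x + dist z y := dist_triangle_left x y z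
    have := hsep x hx y hy hxy
    simp only [mem_ball] at hz1 hz2
    linarith
  -- each small ball is in the annulus
  have hsub : ∀ x ∈ s, ball x (1/2 : ℝ) ⊆ closedBall c (R + 1/2) \ ball c (R - 1/2) := by
    intro x hx z hz
    simp only [mem_ball] at hz
    have hxc := hs x hx
    constructor
    · have := dist_triangle z x c
      simp only [mem_closedBall]
      linarith
    · simp only [mem_ball, not_lt]
      have := dist_triangle x z c
      have hz' : dist x z = dist z x := dist_comm x z
      linarith
  have hUsub : (⋃ x ∈ s, ball x (1/2 : ℝ)) ∪ ball c (R - 1/2) ⊆ closedBall c (R + 1/2) := by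
    apply Set.union_subset
    · apply Set.iUnion₂_subset
      intro x hx
      exact (hsub x hx).trans (Set.diff_subset)
    · intro z hz
      simp only [mem_ball] at hz
      simp only [mem_closedBall]
      linarith
  have hdisj2 : Disjoint (⋃ x ∈ s, ball x (1/2 : ℝ)) (ball c (R - 1/2)) := by
    apply Set.disjoint_left.2
    intro z hz hz2
    simp only [Set.mem_iUnion] at hz
    obtain ⟨x, hx, hzx⟩ := hz
    exact ((hsub x hx) hzx).2 hz2
  have hmeasU : volume (⋃ x ∈ s, ball x (1/2 : ℝ)) =
      (s.card : ℝ≥0∞) * (ENNReal.ofReal ((1/2 : ℝ) ^ 3) * κ) := by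
    rw [measure_biUnion_finset hdisj (fun x _ => measurableSet_ball)]
    rw [Finset.sum_congr rfl (fun x _ => hball x (1/2) (by norm_num))]
    rw [Finset.sum_const, nsmul_eq_mul]
  have key : (s.card : ℝ≥0∞) * (ENNReal.ofReal ((1/2 : ℝ) ^ 3) * κ) +
      ENNReal.ofReal ((R - 1/2) ^ 3) * κ ≤ ENNReal.ofReal ((R + 1/2) ^ 3) * κ := by
    rw [← hmeasU, ← hball c (R - 1/2) (by linarith), ← hcball c (R + 1/2) (by linarith),
      ← measure_union hdisj2 measurableSet_ball]
    exact measure_mono hUsub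
  -- convert to real numbers
  set k := κ.toReal with hk
  have hk0 : 0 < k := ENNReal.toReal_pos hκ0 hκt
  have hfin1 : (s.card : ℝ≥0∞) * (ENNReal.ofReal ((1/2 : ℝ) ^ 3) * κ) ≠ ⊤ := by
    exact ENNReal.mul_ne_top (ENNReal.natCast_ne_top _)
      (ENNReal.mul_ne_top ENNReal.ofReal_ne_top hκt)
  have hfin2 : ENNReal.ofReal ((R - 1/2) ^ 3) * κ ≠ ⊤ :=
    ENNReal.mul_ne_top ENNReal.ofReal_ne_top hκt
  have hfin3 : ENNReal.ofReal ((R + 1/2) ^ 3) * κ ≠ ⊤ :=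
    ENNReal.mul_ne_top ENNReal.ofReal_ne_top hκt
  have hreal := ENNReal.toReal_mono hfin3 key
  have hR3 : (0:ℝ) ≤ (R - 1/2) ^ 3 := pow_nonneg (by linarith) 3
  have hR3' : (0:ℝ) ≤ (R + 1/2) ^ 3 := pow_nonneg (by linarith) 3
  rw [ENNReal.toReal_add hfin1 hfin2] at hreal
  simp only [ENNReal.toReal_mul, ENNReal.toReal_natCast,
    ENNReal.toReal_ofReal (by positivity : (0:ℝ) ≤ (1/2:ℝ) ^ 3),
    ENNReal.toReal_ofReal hR3, ENNReal.toReal_ofReal hR3'] at hreal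
  have hstep : ((s.card : ℝ) * (1/2) ^ 3 + (R - 1/2) ^ 3) ≤ (R + 1/2) ^ 3 := by
    have h2 : ((s.card : ℝ) * (1/2) ^ 3 + (R - 1/2) ^ 3) * k ≤ (R + 1/2) ^ 3 * k := by
      calc ((s.card : ℝ) * (1/2) ^ 3 + (R - 1/2) ^ 3) * k
          = (s.card : ℝ) * ((1/2) ^ 3 * k) + (R - 1/2) ^ 3 * k := by ring
        _ ≤ (R + 1/2) ^ 3 * k := hreal
    exact le_of_mul_le_mul_right h2 hk0
  nlinarith [hstep, hR, sq_nonneg R]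

lemma lift_to_sphere (c : E) (R : ℝ) (B : Finset E)
    (hconv : ConvexPos (B : Set E))
    (hball : (B : Set E) ⊆ closedBall c R)
    (b : E) (hb : b ∈ B) (hex : ∃ a ∈ B, a ≠ b) :
    ∃ u : E, dist u c = R ∧ ∀ a ∈ B, ⟪u - b, a - b⟫ ≤ 0 := by
  classical
  set S : Set E := (B : Set E) \ {b} with hS
  have hSfin : S.Finite := (B.finite_toSet).diff  --
  have hbS : b ∉ convexHull ℝ S := hconv b (by exact_mod_cast hb)
  have hclosed : IsClosed (convexHull ℝ S) := (hSfin.isCompact_convexHull (𝕜 := ℝ)).isClosed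
  obtain ⟨f, t, hf1, hf2⟩ :=
    geometric_hahn_banach_closed_point (convex_convexHull ℝ S) hclosed hbS
  set v : E := (InnerProductSpace.toDual ℝ E).symm f with hv
  have hvf : ∀ x : E, ⟪v, x⟫ = f x := fun x => InnerProductSpace.toDual_symm_apply
  have hvab : ∀ a ∈ B, ⟪v, a - b⟫ ≤ 0 := by
    intro a ha
    rcases eq_or_ne a b with rfl | hab
    · simp
    · have haS : a ∈ convexHull ℝ S := subset_convexHull ℝ S ⟨by exact_mod_cast ha, hab⟩
      have := hf1 a haS
      rw [inner_sub_right, hvf, hvf]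
      linarith
  have hvne : v ≠ 0 := by
    obtain ⟨a, ha, hab⟩ := hex
    intro h0
    have haS : a ∈ convexHull ℝ S := subset_convexHull ℝ S ⟨by exact_mod_cast ha, hab⟩
    have h1 := hf1 a haS
    have h2 : f a = ⟪v, a⟫ := (hvf a).symm
    have h3 : f b = ⟪v, b⟫ := (hvf b).symm
    rw [h0] at h2 h3
    simp at h2 h3
    linarith [hf2]
  have hvpos : 0 < ‖v‖ := norm_pos_iff.2 hvne
  have hbc : dist b c ≤ R := hball (by exact_mod_cast hb)
  set T : ℝ := (R + dist b c + 1) / ‖v‖ with hT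
  have hd0 : (0:ℝ) ≤ dist b c := dist_nonneg
  have hT0 : 0 ≤ T := div_nonneg (by linarith) hvpos.le
  have hgT : R ≤ dist (b + T • v) c := by
    have h1 : ‖T • v‖ - ‖c - b‖ ≤ ‖T • v - (c - b)‖ := norm_sub_norm_le _ _
    have h2 : b + T • v - c = T • v - (c - b) := by abel
    have h3 : ‖T • v‖ = T * ‖v‖ := by
      rw [norm_smul, Real.norm_of_nonneg hT0]
    have h4 : T * ‖v‖ = R + dist b c + 1 := by
      rw [hT, div_mul_cancel₀ _ hvpos.ne']
    have h5 : ‖c - b‖ = dist b c := by rw [← dist_eq_norm, dist_comm]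
    rw [dist_eq_norm, h2]
    linarith
  have hcont : ContinuousOn (fun s : ℝ => dist (b + s • v) c) (Set.Icc 0 T) := by
    fun_prop
  have hmem : R ∈ Set.Icc (dist (b + (0:ℝ) • v) c) (dist (b + T • v) c) := by
    constructor
    · simpa using hbc
    · exact hgT
  obtain ⟨s₀, hs₀, hgs₀⟩ := intermediate_value_Icc hT0 hcont hmem
  refine ⟨b + s₀ • v, hgs₀, ?_⟩
  intro a ha
  have : b + s₀ • v - b = s₀ • v := by abel
  rw [this, real_inner_smul_left]
  exact mul_nonpos_of_nonneg_of_nonpos hs₀.1 (hvab a ha)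

end

theorem convex_position_in_ball_card_le :
    ∃ C : ℝ, 0 < C ∧ ∀ R : ℝ, 1 ≤ R →
      ∀ B : Finset (EuclideanSpace ℝ (Fin 3)),
        ConvexPos (B : Set (EuclideanSpace ℝ (Fin 3))) →
        (∀ a ∈ B, ∀ b ∈ B, a ≠ b → 1 ≤ dist a b) →
        (∃ c : EuclideanSpace ℝ (Fin 3),
          (B : Set (EuclideanSpace ℝ (Fin 3))) ⊆ Metric.closedBall c R) →
        (B.card : ℝ) ≤ C * R ^ 2 := by
  classical
  refine ⟨26, by norm_num, ?_⟩
  intro R hR B hconv hsep hc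
  obtain ⟨c, hc⟩ := hc
  by_cases hcard : B.card ≤ 1
  · have : (B.card : ℝ) ≤ 1 := by exact_mod_cast hcard
    nlinarith
  push_neg at hcard
  have hex : ∀ b ∈ B, ∃ a ∈ B, a ≠ b := by
    intro b hb
    obtain ⟨a, ha, hab⟩ := Finset.exists_mem_ne hcard b
    exact ⟨a, ha, hab⟩
  have hlift : ∀ b ∈ B, ∃ u : EuclideanSpace ℝ (Fin 3),
      dist u c = R ∧ ∀ a ∈ B, ⟪u - b, a - b⟫ ≤ 0 := fun b hb =>
    lift_to_sphere c R B hconv hc b hb (hex b hb)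
  choose! u hu1 hu2 using hlift
  have hkey : ∀ a ∈ B, ∀ b ∈ B, a ≠ b → 1 ≤ dist (u a) (u b) := by
    intro a ha b hb hab
    set p := u a - a with hp
    set q := u b - b with hq
    have hpa : ⟪p, b - a⟫ ≤ 0 := hu2 a ha b hb
    have hqb : ⟪q, a - b⟫ ≤ 0 := hu2 b hb a ha
    have hdecomp : u a - u b = (a - b) + (p - q) := by rw [hp, hq]; abel
    have hsq : ‖u a - u b‖ ^ 2 = ‖a - b‖ ^ 2 + 2 * ⟪a - b, p - q⟫ + ‖p - q‖ ^ 2 := by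
      rw [hdecomp, norm_add_sq_real]
    have hcross : 0 ≤ ⟪a - b, p - q⟫ := by
      rw [inner_sub_right]
      have h1 : ⟪a - b, p⟫ = -⟪p, b - a⟫ := by
        rw [real_inner_comm, show b - a = -(a - b) from by abel, inner_neg_right]
        ring
      have h2 : ⟪a - b, q⟫ = ⟪q, a - b⟫ := real_inner_comm _ _
      linarith
    have hab1 : 1 ≤ ‖a - b‖ := by rw [← dist_eq_norm]; exact hsep a ha b hb hab
    have h2 : 1 ≤ ‖u a - u b‖ ^ 2 := by nlinarith [sq_nonneg ‖p - q‖]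
    have h3 : 0 ≤ ‖u a - u b‖ := norm_nonneg _
    rw [dist_eq_norm]
    nlinarith
  have hinj : Set.InjOn u (B : Set (EuclideanSpace ℝ (Fin 3))) := by
    intro a ha b hb hab
    by_contra hne
    have := hkey a (by exact_mod_cast ha) b (by exact_mod_cast hb) hne
    rw [hab] at this
    simp only [dist_self] at this
    linarith
  have hcardeq : (B.image u).card = B.card := Finset.card_image_of_injOn hinj
  have := sphere_packing c R hR (B.image u)
    (by intro x hx
        obtain ⟨b, hb, rfl⟩ := Finset.mem_image.1 hx
        exact hu1 b hb)
    (by intro x hx y hy hxy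
        obtain ⟨a, ha, rfl⟩ := Finset.mem_image.1 hx
        obtain ⟨b, hb, rfl⟩ := Finset.mem_image.1 hy
        exact hkey a ha b hb (fun h => hxy (by rw [h])))
  rw [hcardeq] at this
  exact this
end

section
/- For every integer d ≥ 2 there is a constant C_d > 0 such that for every real R ≥ 1, every finite set B ⊂ ℝ^d in convex position whose pairwise Euclidean distances are all at least 1 and which is contained in a closed ball of radius R satisfies |B| ≤ C_d·R^{d−1}. -/
open Metric MeasureTheory InnerProductSpace RealInnerProductSpace Finset

private lemma aux_pow_sub_pow {a b : ℝ} (hb : 0 ≤ b) (hab : b ≤ a) (n : ℕ) :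
    a ^ (n+1) - b ^ (n+1) ≤ (n+1) * a ^ n * (a - b) := by
  induction n with
  | zero => simp
  | succ n ih =>
    have ha : 0 ≤ a := hb.trans hab
    have hpow : b ^ (n+1) ≤ a ^ (n+1) := pow_le_pow_left₀ hb hab _
    have h1 : a * (a ^ (n+1) - b ^ (n+1)) ≤ a * ((n+1) * a ^ n * (a - b)) :=
      mul_le_mul_of_nonneg_left ih ha
    have h2 : (a - b) * b ^ (n+1) ≤ (a - b) * a ^ (n+1) :=
      mul_le_mul_of_nonneg_left hpow (by linarith)
    have h3 : a ^ (n+1+1) - b ^ (n+1+1) = a * (a ^ (n+1) - b ^ (n+1)) + (a - b) * b ^ (n+1) := by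
      ring
    have h4 : a * ((n+1) * a ^ n * (a - b)) = ((n:ℝ)+1) * a ^ (n+1) * (a - b) := by ring
    have h5 : ((n:ℝ)+1+1) * a ^ (n+1) * (a - b)
        = ((n:ℝ)+1) * a ^ (n+1) * (a - b) + (a - b) * a ^ (n+1) := by ring
    push_cast
    linarith

lemma aux_exists_normal {d : ℕ} (B : Finset (EuclideanSpace ℝ (Fin d)))
    (hcp : ∀ x ∈ (B : Set (EuclideanSpace ℝ (Fin d))),
      x ∉ convexHull ℝ ((B : Set (EuclideanSpace ℝ (Fin d))) \ {x}))
    (hcard : 1 < B.card) :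
    ∀ v ∈ B, ∃ nv : EuclideanSpace ℝ (Fin d), ‖nv‖ = 1 ∧
      ∀ w ∈ B, ⟪nv, w - v⟫_ℝ ≤ 0 := by
  intro v hv
  have h1 : v ∉ convexHull ℝ ((B : Set (EuclideanSpace ℝ (Fin d))) \ {v}) := hcp v hv
  have hfin : ((B : Set (EuclideanSpace ℝ (Fin d))) \ {v}).Finite :=
    B.finite_toSet.diff
  obtain ⟨f, s, hfs, hsf⟩ := geometric_hahn_banach_closed_point
    (convex_convexHull ℝ _) (hfin.isCompact_convexHull (𝕜 := ℝ)).isClosed h1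
  obtain ⟨w0, hw0B, hw0v⟩ := Finset.exists_mem_ne hcard v
  have hw0 : f w0 < s := hfs _ (subset_convexHull ℝ _ ⟨hw0B, hw0v⟩)
  set y := (toDual ℝ (EuclideanSpace ℝ (Fin d))).symm f with hy
  have hyapp : ∀ x, ⟪y, x⟫_ℝ = f x := fun x => toDual_symm_apply
  have hyne : y ≠ 0 := by
    intro h0
    have := hyapp (v - w0)
    rw [h0, inner_zero_left, map_sub] at this
    linarith
  have hny : 0 < ‖y‖ := norm_pos_iff.mpr hyne
  refine ⟨‖y‖⁻¹ • y, ?_, ?_⟩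
  · rw [norm_smul, norm_inv, norm_norm, inv_mul_cancel₀ hny.ne']
  · intro w hw
    rcases eq_or_ne w v with rfl | hne
    · simp
    · have hfw : f w < f v := lt_trans (hfs _ (subset_convexHull ℝ _ ⟨hw, hne⟩)) hsf
      have h2 : ⟪y, w - v⟫_ℝ ≤ 0 := by
        rw [hyapp, map_sub]; linarith
      rw [real_inner_smul_left]
      exact mul_nonpos_of_nonneg_of_nonpos (inv_nonneg.mpr (norm_nonneg _)) h2

-- ray-to-sphere construction facts
lemma aux_ray {R : ℝ} (hR : 1 ≤ R) (c v nv : EuclideanSpace ℝ (Fin d))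
    (hn : ‖nv‖ = 1) (hvc : ‖v - c‖ ≤ R) :
    ∃ t : ℝ, 0 ≤ t ∧ ‖(v + t • nv) - c‖ = R + 1 := by
  set a : ℝ := ⟪v - c, nv⟫_ℝ with ha
  have hΔ : 0 < (R+1)^2 - ‖v - c‖^2 := by nlinarith [norm_nonneg (v - c)]
  set s : ℝ := Real.sqrt (a^2 + ((R+1)^2 - ‖v - c‖^2)) with hs
  have hs2 : s^2 = a^2 + ((R+1)^2 - ‖v - c‖^2) := Real.sq_sqrt (by nlinarith [sq_nonneg a])
  have hsa : a ≤ s := by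
    have h1 : |a| ≤ s := by
      rw [hs, ← Real.sqrt_sq_eq_abs]
      exact Real.sqrt_le_sqrt (by linarith)
    exact le_trans (le_abs_self a) h1
  refine ⟨s - a, by linarith, ?_⟩
  have hkey : ‖(v + (s - a) • nv) - c‖^2 = (R+1)^2 := by
    have h2 : (v + (s - a) • nv) - c = (v - c) + (s - a) • nv := by abel
    rw [h2, norm_add_sq_real, real_inner_smul_right, norm_smul, ← ha]
    rw [hn]
    simp only [Real.norm_eq_abs, mul_one]
    rw [sq_abs]
    nlinarith
  have hnn : (0:ℝ) ≤ R + 1 := by linarith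
  calc ‖(v + (s - a) • nv) - c‖ = Real.sqrt (‖(v + (s - a) • nv) - c‖^2) :=
        (Real.sqrt_sq (norm_nonneg _)).symm
    _ = Real.sqrt ((R+1)^2) := by rw [hkey]
    _ = R + 1 := Real.sqrt_sq hnn

-- expansiveness
lemma aux_expand (v w nv nw : EuclideanSpace ℝ (Fin d)) {tv tw : ℝ}
    (htv : 0 ≤ tv) (htw : 0 ≤ tw)
    (hv : ⟪nv, w - v⟫_ℝ ≤ 0) (hw : ⟪nw, v - w⟫_ℝ ≤ 0) :
    dist v w ≤ dist (v + tv • nv) (w + tw • nw) := by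
  have h1 : (v + tv • nv) - (w + tw • nw) = (v - w) + (tv • nv - tw • nw) := by abel
  have hcross : 0 ≤ ⟪v - w, tv • nv - tw • nw⟫_ℝ := by
    rw [inner_sub_right, real_inner_smul_right, real_inner_smul_right]
    have h2 : 0 ≤ ⟪v - w, nv⟫_ℝ := by
      rw [real_inner_comm]
      have : v - w = -(w - v) := by abel
      rw [this, inner_neg_right]
      linarith
    have h3 : ⟪v - w, nw⟫_ℝ ≤ 0 := by rw [real_inner_comm]; exact hw
    have := mul_nonneg htv h2
    have := mul_nonpos_of_nonneg_of_nonpos htw h3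
    linarith
  have hsq : ‖v - w‖^2 ≤ ‖(v + tv • nv) - (w + tw • nw)‖^2 := by
    rw [h1, norm_add_sq_real]
    nlinarith [sq_nonneg ‖tv • nv - tw • nw‖]
  rw [dist_eq_norm, dist_eq_norm]
  nlinarith [norm_nonneg (v - w), norm_nonneg ((v + tv • nv) - (w + tw • nw))]

lemma aux_packing {d : ℕ} (hd : 2 ≤ d) {R : ℝ} (hR : 1 ≤ R)
    (c : EuclideanSpace ℝ (Fin d)) (B : Finset (EuclideanSpace ℝ (Fin d)))
    (u : EuclideanSpace ℝ (Fin d) → EuclideanSpace ℝ (Fin d))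
    (hu : ∀ v ∈ B, dist (u v) c = R + 1)
    (husep : ∀ v ∈ B, ∀ w ∈ B, v ≠ w → 1 ≤ dist (u v) (u w)) :
    (B.card : ℝ) * (1/2)^d ≤ (R + 3/2)^d - (R + 1/2)^d := by
  haveI : Nonempty (Fin d) := Fin.pos_iff_nonempty.mp (by omega)
  -- disjointness of the small balls
  have hdisj : (B : Set (EuclideanSpace ℝ (Fin d))).PairwiseDisjoint
      (fun v => ball (u v) (1/2 : ℝ)) := by
    intro v hv w hw hvw
    exact ball_disjoint_ball (by
      have := husep v hv w hw hvw; linarith)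
  have hsum : ∑ v ∈ B, volume (ball (u v) (1/2 : ℝ))
      = volume (⋃ v ∈ B, ball (u v) (1/2 : ℝ)) :=
    (measure_biUnion_finset hdisj (fun v _ => measurableSet_ball)).symm
  -- inner ball disjoint from the union
  have hdisj2 : Disjoint (ball c (R + 1/2)) (⋃ v ∈ B, ball (u v) (1/2 : ℝ)) := by
    rw [Set.disjoint_iUnion_right]
    intro v
    rw [Set.disjoint_iUnion_right]
    intro hv
    refine ball_disjoint_ball ?_
    rw [dist_comm, hu v hv]; linarith
  have hmeas : MeasurableSet (⋃ v ∈ B, ball (u v) (1/2 : ℝ)) :=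
    B.measurableSet_biUnion (fun v _ => measurableSet_ball)
  have hunion : volume (ball c (R + 1/2) ∪ ⋃ v ∈ B, ball (u v) (1/2 : ℝ))
      = volume (ball c (R + 1/2)) + volume (⋃ v ∈ B, ball (u v) (1/2 : ℝ)) :=
    measure_union hdisj2 hmeas
  have hsub : ball c (R + 1/2) ∪ (⋃ v ∈ B, ball (u v) (1/2 : ℝ))
      ⊆ closedBall c (R + 3/2) := by
    apply Set.union_subset
    · exact ball_subset_closedBall.trans (closedBall_subset_closedBall (by linarith))
    · intro x hx
      simp only [Set.mem_iUnion] at hx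
      obtain ⟨v, hv, hxv⟩ := hx
      rw [mem_ball] at hxv
      rw [mem_closedBall]
      calc dist x c ≤ dist x (u v) + dist (u v) c := dist_triangle _ _ _
        _ ≤ 1/2 + (R+1) := by rw [hu v hv]; linarith
        _ ≤ R + 3/2 := by linarith
  have hineq : volume (ball c (R + 1/2)) + ∑ v ∈ B, volume (ball (u v) (1/2 : ℝ))
      ≤ volume (closedBall c (R + 3/2)) := by
    rw [hsum, ← hunion]
    exact measure_mono hsub
  -- compute volumes
  set κ : ℝ := Real.sqrt Real.pi ^ d / Real.Gamma (d/2 + 1) with hκ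
  have hκpos : 0 < κ := by
    apply div_pos (pow_pos (Real.sqrt_pos.mpr Real.pi_pos) d)
    apply Real.Gamma_pos_of_pos; positivity
  have hvol : ∀ (x : EuclideanSpace ℝ (Fin d)) (r : ℝ), 0 ≤ r →
      volume (ball x r) = ENNReal.ofReal (r ^ d * κ) := by
    intro x r hr
    rw [EuclideanSpace.volume_ball, Fintype.card_fin, ← ENNReal.ofReal_pow hr,
      ← ENNReal.ofReal_mul (by positivity)]
  have hvolc : volume (closedBall c (R + 3/2)) = ENNReal.ofReal ((R + 3/2) ^ d * κ) := by
    rw [EuclideanSpace.volume_closedBall, Fintype.card_fin,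
      ← ENNReal.ofReal_pow (by linarith), ← ENNReal.ofReal_mul (by positivity)]
  rw [hvolc, hvol c (R + 1/2) (by linarith)] at hineq
  have hsum2 : ∑ v ∈ B, volume (ball (u v) (1/2 : ℝ))
      = ENNReal.ofReal ((B.card : ℝ) * ((1/2:ℝ)^d * κ)) := by
    rw [Finset.sum_congr rfl (fun v _ => hvol (u v) (1/2) (by norm_num)),
      Finset.sum_const, nsmul_eq_mul, ← ENNReal.ofReal_natCast B.card,
      ← ENNReal.ofReal_mul (by positivity)]
  rw [hsum2, ← ENNReal.ofReal_add (by positivity) (by positivity)] at hineq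
  have hreal : (R + 1/2)^d * κ + (B.card : ℝ) * ((1/2:ℝ)^d * κ) ≤ (R + 3/2)^d * κ :=
    (ENNReal.ofReal_le_ofReal_iff (by positivity)).mp hineq
  have h1 : (B.card : ℝ) * (1/2)^d * κ ≤ ((R + 3/2)^d - (R + 1/2)^d) * κ := by nlinarith
  have := (mul_le_mul_iff_of_pos_right hκpos).mp h1
  linarith

theorem convex_position_in_ball_card_le_dim :
    ∀ d : ℕ, 2 ≤ d → ∃ C : ℝ, 0 < C ∧ ∀ R : ℝ, 1 ≤ R →
      ∀ B : Finset (EuclideanSpace ℝ (Fin d)),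
        ConvexPos (B : Set (EuclideanSpace ℝ (Fin d))) →
        (∀ a ∈ B, ∀ b ∈ B, a ≠ b → 1 ≤ dist a b) →
        (∃ c : EuclideanSpace ℝ (Fin d),
          (B : Set (EuclideanSpace ℝ (Fin d))) ⊆ Metric.closedBall c R) →
        (B.card : ℝ) ≤ C * R ^ (d - 1) := by
  intro d hd
  have hd0 : (0:ℝ) < d := by exact_mod_cast (by omega : 0 < d)
  refine ⟨6 ^ d * d, mul_pos (by positivity) hd0, ?_⟩
  intro R hR B hcp hsep hball
  obtain ⟨c, hc⟩ := hball
  have hRpow : (1:ℝ) ≤ R ^ (d-1) := one_le_pow₀ hR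
  have hC1 : (1:ℝ) ≤ 6 ^ d * (d:ℝ) := by
    have h6 : (1:ℝ) ≤ 6 ^ d := one_le_pow₀ (by norm_num)
    have hd1 : (1:ℝ) ≤ (d:ℝ) := by exact_mod_cast (by omega : 1 ≤ d)
    nlinarith
  by_cases hcard : B.card ≤ 1
  · calc (B.card : ℝ) ≤ 1 := by exact_mod_cast hcard
      _ ≤ 6 ^ d * d * R ^ (d-1) := by nlinarith
  push_neg at hcard
  -- outward unit normals
  have hnormal := aux_exists_normal B hcp hcard
  choose! n hn1 hn2 using hnormal
  -- rays to the sphere of radius R+1 around c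
  have hray : ∀ v ∈ B, ∃ t : ℝ, 0 ≤ t ∧ ‖(v + t • n v) - c‖ = R + 1 := fun v hv =>
    aux_ray hR c v (n v) (hn1 v hv) (by rw [← dist_eq_norm]; exact mem_closedBall.mp (hc hv))
  choose! t ht0 ht1 using hray
  set u : EuclideanSpace ℝ (Fin d) → EuclideanSpace ℝ (Fin d) :=
    fun v => v + t v • n v with hudef
  have hu : ∀ v ∈ B, dist (u v) c = R + 1 := fun v hv => by
    rw [dist_eq_norm]; exact ht1 v hv
  have husep : ∀ v ∈ B, ∀ w ∈ B, v ≠ w → 1 ≤ dist (u v) (u w) := by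
    intro v hv w hw hvw
    have h1 : 1 ≤ dist v w := hsep v hv w hw hvw
    have h2 := aux_expand v w (n v) (n w) (ht0 v hv) (ht0 w hw) (hn2 v hv w hw) (hn2 w hw v hv)
    exact le_trans h1 h2
  have hpack := aux_packing hd hR c B u hu husep
  -- final algebra
  obtain ⟨m, rfl⟩ : ∃ m, d = m + 1 := ⟨d - 1, by omega⟩
  have hhalf : (2:ℝ)^(m+1) * (1/2)^(m+1) = 1 := by
    rw [← mul_pow]; norm_num
  have e1 : (B.card:ℝ) ≤ 2^(m+1) * ((R+3/2)^(m+1) - (R+1/2)^(m+1)) := by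
    have h := mul_le_mul_of_nonneg_left hpack (by positivity : (0:ℝ) ≤ 2^(m+1))
    calc (B.card:ℝ) = 2^(m+1) * ((B.card:ℝ) * (1/2)^(m+1)) := by
          rw [mul_left_comm, hhalf, mul_one]
      _ ≤ _ := h
  have e2 : (R+3/2)^(m+1) - (R+1/2)^(m+1) ≤ ((m:ℝ)+1) * (R+3/2)^m := by
    have h := aux_pow_sub_pow (show (0:ℝ) ≤ R+1/2 by linarith)
      (show R+1/2 ≤ R+3/2 by linarith) m
    have h' : (R+3/2) - (R+1/2) = (1:ℝ) := by ring
    rw [h', mul_one] at h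
    exact h
  have e3 : (R+3/2)^m ≤ 3^m * R^m := by
    rw [← mul_pow]
    exact pow_le_pow_left₀ (by linarith) (by linarith) m
  have e4 : (2:ℝ)^(m+1) * 3^m ≤ 6^(m+1) := by
    have h6 : (6:ℝ)^(m+1) = 2^(m+1) * 3^(m+1) := by rw [← mul_pow]; norm_num
    rw [h6]
    have h3 : (3:ℝ)^m ≤ 3^(m+1) := pow_le_pow_right₀ (by norm_num) (by omega)
    exact mul_le_mul_of_nonneg_left h3 (by positivity)
  have hm1 : (0:ℝ) ≤ (m:ℝ)+1 := by positivity
  have hRm : (0:ℝ) ≤ R^m := by positivity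
  have goal' : (B.card : ℝ) ≤ 6^(m+1) * ((m:ℝ)+1) * R^m := by
    calc (B.card:ℝ) ≤ 2^(m+1) * ((R+3/2)^(m+1) - (R+1/2)^(m+1)) := e1
      _ ≤ 2^(m+1) * (((m:ℝ)+1) * (R+3/2)^m) :=
          mul_le_mul_of_nonneg_left e2 (by positivity)
      _ ≤ 2^(m+1) * (((m:ℝ)+1) * (3^m * R^m)) := by
          refine mul_le_mul_of_nonneg_left ?_ (by positivity)
          exact mul_le_mul_of_nonneg_left e3 hm1
      _ = (2^(m+1) * 3^m) * (((m:ℝ)+1) * R^m) := by ring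
      _ ≤ 6^(m+1) * (((m:ℝ)+1) * R^m) :=
          mul_le_mul_of_nonneg_right e4 (by positivity)
      _ = 6^(m+1) * ((m:ℝ)+1) * R^m := by ring
  have hexp : m + 1 - 1 = m := by omega
  rw [hexp]
  push_cast
  push_cast at goal'
  exact goal'
end

section
/- Let R > 0 and 0 < h ≤ R. Let V be a finite set of unit vectors in ℝ³ such that the spherical caps SurfCap(v) = {x ∈ ℝ³ : ‖x‖ = R and ⟨x, v⟩ ≥ R − h}, for v ∈ V, are pairwise disjoint, and such that the packing is maximal in the sense that for every unit vector w there exists v ∈ V with SurfCap(w) ∩ SurfCap(v) ≠ ∅. Then |V| ≥ R/(2h). (Equivalently: the caps in a maximal packing of caps of height h cover at least one quarter of the total surface area 4πR² of the sphere, each cap having surface area 2πRh.) -/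
open MeasureTheory Set
open scoped RealInnerProductSpace ENNReal

lemma volume_disc (s : ℝ) : volume {y : Fin 2 → ℝ | y 0^2 + y 1^2 ≤ s}
    = ENNReal.ofReal (Real.pi * s) := by
  rcases lt_or_ge s 0 with hs | hs
  · have : {y : Fin 2 → ℝ | y 0^2 + y 1^2 ≤ s} = ∅ := by
      ext y; simp only [Set.mem_setOf_eq, Set.mem_empty_iff_false, iff_false, not_le]
      nlinarith [sq_nonneg (y 0), sq_nonneg (y 1)]
    rw [this, measure_empty, Eq.comm, ENNReal.ofReal_eq_zero]
    nlinarith [Real.pi_pos]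
  · have hp : MeasurePreserving (MeasurableEquiv.toLp 2 (Fin 2 → ℝ))
        (volume : Measure (Fin 2 → ℝ)) volume :=
      (EuclideanSpace.volume_preserving_symm_measurableEquiv_toLp (Fin 2)).symm
    have hset : {y : Fin 2 → ℝ | y 0^2 + y 1^2 ≤ s}
        = (MeasurableEquiv.toLp 2 (Fin 2 → ℝ)) ⁻¹'
          (Metric.closedBall 0 (Real.sqrt s)) := by
      ext y
      simp only [Set.mem_setOf_eq, Set.mem_preimage, Metric.mem_closedBall, dist_zero_right,
        EuclideanSpace.norm_eq, MeasurableEquiv.coe_toLp, Fin.sum_univ_two,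
        PiLp.toLp_apply, Real.norm_eq_abs, sq_abs]
      rw [show Real.sqrt (y 0 ^ 2 + y 1 ^ 2) ≤ Real.sqrt s ↔ y 0^2 + y 1^2 ≤ s from
        Real.sqrt_le_sqrt_iff (by positivity)]
    rw [hset, hp.measure_preimage measurableSet_closedBall.nullMeasurableSet,
      EuclideanSpace.volume_closedBall]
    simp only [Fintype.card_fin]
    rw [show ((2:ℕ) : ℝ) / 2 + 1 = 2 by norm_num, Real.Gamma_two]
    rw [← ENNReal.ofReal_pow (Real.sqrt_nonneg s), ← ENNReal.ofReal_mul (by positivity)]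
    congr 1
    rw [Real.sq_sqrt hs, Real.sq_sqrt Real.pi_pos.le]
    ring

lemma volume_sectorPi (R t : ℝ) (hR : 0 < R) (ht0 : 0 < t) (ht1 : t ≤ 1) :
    volume {y : Fin 3 → ℝ | y 0^2 + y 1^2 + y 2^2 ≤ R^2 ∧ 0 ≤ y 0 ∧
        t^2*(y 0^2 + y 1^2 + y 2^2) ≤ y 0^2}
      = ENNReal.ofReal (2*Real.pi/3 * ((1-t) * R^3)) := by
  have ht2 : (0:ℝ) < t^2 := by positivity
  set a : ℝ := (1-t^2)/t^2 with ha_def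
  have ha : 0 ≤ a := by
    apply div_nonneg _ ht2.le; nlinarith
  set S : Set (ℝ × (Fin 2 → ℝ)) :=
    {p | 0 ≤ p.1 ∧ p.2 0^2 + p.2 1^2 ≤ min (R^2 - p.1^2) (a * p.1^2)} with hS_def
  have hkey : ∀ z q : ℝ, 0 ≤ z → ((z^2 + q ≤ R^2 ∧ t^2*(z^2+q) ≤ z^2) ↔
      q ≤ min (R^2 - z^2) (a*z^2)) := by
    intro z q _
    rw [le_min_iff]
    have h2 : t^2*(z^2+q) ≤ z^2 ↔ q ≤ a*z^2 := by
      rw [ha_def, div_mul_eq_mul_div, le_div_iff₀ ht2]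
      constructor <;> intro h <;> nlinarith
    rw [h2]
    constructor <;> intro h <;> constructor <;> [skip; skip; skip; skip] <;> first
      | linarith [h.1, h.2] | linarith [h.1] | linarith [h.2]
  have hSm : MeasurableSet S := by
    have h1 : MeasurableSet {p : ℝ × (Fin 2 → ℝ) | 0 ≤ p.1} :=
      measurableSet_le measurable_const measurable_fst
    have h2 : MeasurableSet
        {p : ℝ × (Fin 2 → ℝ) | p.2 0 ^ 2 + p.2 1 ^ 2 ≤ min (R ^ 2 - p.1 ^ 2) (a * p.1 ^ 2)} :=
      measurableSet_le (by fun_prop) (by fun_prop)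
    exact h1.inter h2
  have hps := MeasureTheory.volume_preserving_piFinSuccAbove (fun _ : Fin 3 => ℝ) 0
  have hBS : {y : Fin 3 → ℝ | y 0^2 + y 1^2 + y 2^2 ≤ R^2 ∧ 0 ≤ y 0 ∧
        t^2*(y 0^2 + y 1^2 + y 2^2) ≤ y 0^2}
      = (MeasurableEquiv.piFinSuccAbove (fun _ : Fin 3 => ℝ) 0) ⁻¹' S := by
    ext y
    have e1 : (0:Fin 3).succAbove (0:Fin 2) = 1 := rfl
    have e2 : (0:Fin 3).succAbove (1:Fin 2) = 2 := rfl
    simp only [mem_setOf_eq, mem_preimage, MeasurableEquiv.piFinSuccAbove_apply, hS_def,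
      Fin.removeNth, e1, e2]
    constructor
    · rintro ⟨h1, h2, h3⟩
      exact ⟨h2, (hkey (y 0) (y 1^2 + y 2^2) h2).mp ⟨by linarith, by linarith⟩⟩
    · rintro ⟨h1, h2⟩
      obtain ⟨h3, h4⟩ := (hkey (y 0) (y 1^2 + y 2^2) h1).mpr h2
      exact ⟨by linarith, h1, by linarith⟩
  rw [hBS, hps.measure_preimage hSm.nullMeasurableSet, Measure.volume_eq_prod, Measure.prod_apply hSm]
  have hslice : ∀ z : ℝ, volume (Prod.mk z ⁻¹' S) =
      Set.indicator (Set.Ici 0)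
        (fun z => ENNReal.ofReal (Real.pi * min (R^2 - z^2) (a*z^2))) z := by
    intro z
    rcases le_or_gt 0 z with hz | hz
    · rw [Set.indicator_of_mem (show z ∈ Set.Ici 0 from hz)]
      have : Prod.mk z ⁻¹' S = {y : Fin 2 → ℝ | y 0^2 + y 1^2 ≤ min (R^2 - z^2) (a*z^2)} := by
        ext y; simp [hS_def, hz]
      rw [this, volume_disc]
    · rw [Set.indicator_of_notMem (by simpa using hz)]
      have : Prod.mk z ⁻¹' S = ∅ := by
        ext y; simp only [mem_preimage, hS_def, mem_setOf_eq, mem_empty_iff_false, iff_false,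
          not_and]
        intro h; linarith
      rw [this, measure_empty]
  simp_rw [hslice]
  rw [lintegral_indicator measurableSet_Ici]
  have hIci : Set.Ici (0:ℝ) = Set.Icc 0 R ∪ Set.Ioi R := (Set.Icc_union_Ioi_eq_Ici hR.le).symm
  have hdisj : Disjoint (Set.Icc (0:ℝ) R) (Set.Ioi R) := by
    rw [Set.disjoint_left]; intro x hx hx'; exact absurd hx.2 (not_le.mpr hx')
  rw [hIci, lintegral_union measurableSet_Ioi hdisj]
  have hzero : ∫⁻ z in Set.Ioi R, ENNReal.ofReal (Real.pi * min (R^2 - z^2) (a*z^2)) = 0 := by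
    rw [← lintegral_zero (μ := volume.restrict (Set.Ioi R))]
    apply setLIntegral_congr_fun measurableSet_Ioi
    intro z hz
    rw [ENNReal.ofReal_eq_zero]
    have h1 : min (R^2 - z^2) (a*z^2) ≤ R^2 - z^2 := min_le_left _ _
    have h2 : R^2 - z^2 < 0 := by nlinarith [Set.mem_Ioi.mp hz]
    nlinarith [Real.pi_pos]
  rw [hzero, add_zero]
  have hcont : Continuous (fun z : ℝ => Real.pi * min (R^2 - z^2) (a*z^2)) :=
    continuous_const.mul ((continuous_const.sub (continuous_pow 2)).min
      (continuous_const.mul (continuous_pow 2)))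
  have hint : IntegrableOn (fun z : ℝ => Real.pi * min (R^2 - z^2) (a*z^2)) (Set.Icc 0 R) :=
    hcont.integrableOn_Icc
  have hnn : 0 ≤ᵐ[volume.restrict (Set.Icc (0:ℝ) R)]
      fun z : ℝ => Real.pi * min (R^2 - z^2) (a*z^2) := by
    rw [Filter.EventuallyLE, ae_restrict_iff' measurableSet_Icc]
    filter_upwards with z hz
    obtain ⟨hz0, hzR⟩ := hz
    have h1 : 0 ≤ R^2 - z^2 := by nlinarith
    have h2 : 0 ≤ a * z^2 := by positivity
    exact mul_nonneg Real.pi_pos.le (le_min h1 h2)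
  rw [← ofReal_integral_eq_lintegral_ofReal hint hnn]
  congr 1
  rw [MeasureTheory.integral_Icc_eq_integral_Ioc, ← intervalIntegral.integral_of_le hR.le]
  have htR : 0 ≤ t * R := by positivity
  have htRR : t * R ≤ R := by nlinarith
  have hi1 : IntervalIntegrable (fun z : ℝ => Real.pi * min (R^2 - z^2) (a*z^2)) volume 0 (t*R) :=
    hcont.intervalIntegrable _ _
  have hi2 : IntervalIntegrable (fun z : ℝ => Real.pi * min (R^2 - z^2) (a*z^2)) volume (t*R) R :=
    hcont.intervalIntegrable _ _
  rw [← intervalIntegral.integral_add_adjacent_intervals hi1 hi2]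
  have hta : t^2 * a = 1 - t^2 := by rw [ha_def, mul_div_assoc', mul_div_cancel_left₀ _ ht2.ne']
  have hJ1 : ∫ z in (0:ℝ)..(t*R), Real.pi * min (R^2 - z^2) (a*z^2)
      = ∫ z in (0:ℝ)..(t*R), (Real.pi * a) * z^2 := by
    apply intervalIntegral.integral_congr
    intro z hz
    rw [Set.uIcc_of_le htR] at hz
    obtain ⟨hz0, hz1⟩ := hz
    have hz2 : z^2 ≤ t^2 * R^2 := by nlinarith
    have h3 : t^2*(a*z^2 + z^2) = z^2 := by linear_combination z^2 * hta
    have h4 : a*z^2 + z^2 ≤ R^2 := by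
      rw [← mul_le_mul_iff_right₀ ht2, h3]; nlinarith
    show Real.pi * min (R^2 - z^2) (a*z^2) = Real.pi * a * z^2
    rw [min_eq_right (by linarith : a*z^2 ≤ R^2 - z^2)]; ring
  have hJ2 : ∫ z in (t*R)..R, Real.pi * min (R^2 - z^2) (a*z^2)
      = ∫ z in (t*R)..R, (Real.pi * R^2 - Real.pi * z^2) := by
    apply intervalIntegral.integral_congr
    intro z hz
    rw [Set.uIcc_of_le htRR] at hz
    obtain ⟨hz0, hz1⟩ := hz
    have hz2 : t^2 * R^2 ≤ z^2 := by nlinarith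
    have h3 : t^2*(a*z^2 + z^2) = z^2 := by linear_combination z^2 * hta
    have h4 : R^2 ≤ a*z^2 + z^2 := by
      rw [← mul_le_mul_iff_right₀ ht2, h3]; nlinarith
    show Real.pi * min (R^2 - z^2) (a*z^2) = Real.pi * R^2 - Real.pi * z^2
    rw [min_eq_left (by linarith : R^2 - z^2 ≤ a*z^2)]; ring
  rw [hJ1, hJ2, intervalIntegral.integral_const_mul, integral_pow,
    intervalIntegral.integral_sub (g := fun z : ℝ => Real.pi * z^2) intervalIntegrable_const
      ((continuous_const.mul (continuous_pow 2)).intervalIntegrable _ _),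
    intervalIntegral.integral_const, intervalIntegral.integral_const_mul, integral_pow]
  simp only [smul_eq_mul]
  have htne : t ≠ 0 := ne_of_gt ht0
  rw [ha_def]
  field_simp
  ring

lemma volume_sector (R t : ℝ) (hR : 0 < R) (ht0 : 0 < t) (ht1 : t ≤ 1)
    (v : EuclideanSpace ℝ (Fin 3)) (hv : ‖v‖ = 1) :
    volume {x : EuclideanSpace ℝ (Fin 3) | ‖x‖ ≤ R ∧ t * ‖x‖ ≤ ⟪x, v⟫}
      = ENNReal.ofReal (2*Real.pi/3 * ((1-t) * R^3)) := by
  have hcard : Module.finrank ℝ (EuclideanSpace ℝ (Fin 3)) = Fintype.card (Fin 3) := by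
    simp [finrank_euclideanSpace]
  have horth : Orthonormal ℝ (Set.restrict {0} (fun _ : Fin 3 => v)) := by
    constructor
    · intro i; exact hv
    · intro i j hij
      exact absurd (Subtype.ext ((Set.mem_singleton_iff.mp i.2).trans
        (Set.mem_singleton_iff.mp j.2).symm)) hij
  obtain ⟨b, hb⟩ := horth.exists_orthonormalBasis_extension_of_card_eq hcard
  have hb0 : b 0 = v := hb 0 rfl
  set A' : Set (EuclideanSpace ℝ (Fin 3)) := {y | ‖y‖ ≤ R ∧ t * ‖y‖ ≤ y 0} with hA'
  have hA'm : MeasurableSet A' := by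
    have h1 : IsClosed {y : EuclideanSpace ℝ (Fin 3) | ‖y‖ ≤ R} :=
      isClosed_le continuous_norm continuous_const
    have h2 : IsClosed {y : EuclideanSpace ℝ (Fin 3) | t * ‖y‖ ≤ y 0} :=
      isClosed_le (continuous_const.mul continuous_norm) (EuclideanSpace.proj 0).continuous
    exact (h1.inter h2).measurableSet
  have hpre : {x : EuclideanSpace ℝ (Fin 3) | ‖x‖ ≤ R ∧ t * ‖x‖ ≤ ⟪x, v⟫}
      = b.repr ⁻¹' A' := by
    ext x
    have h0 : (b.repr x) 0 = ⟪x, v⟫ := by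
      rw [b.repr_apply_apply, hb0, real_inner_comm]
    simp only [mem_setOf_eq, mem_preimage, hA', b.repr.norm_map, h0]
  rw [hpre, b.measurePreserving_repr.measure_preimage hA'm.nullMeasurableSet]
  have hps : MeasurePreserving (MeasurableEquiv.toLp 2 (Fin 3 → ℝ))
      (volume : Measure (Fin 3 → ℝ)) volume :=
    (EuclideanSpace.volume_preserving_symm_measurableEquiv_toLp (Fin 3)).symm
  rw [← hps.measure_preimage hA'm.nullMeasurableSet]
  have hset : (MeasurableEquiv.toLp 2 (Fin 3 → ℝ)) ⁻¹' A'
      = {y : Fin 3 → ℝ | y 0^2 + y 1^2 + y 2^2 ≤ R^2 ∧ 0 ≤ y 0 ∧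
          t^2*(y 0^2 + y 1^2 + y 2^2) ≤ y 0^2} := by
    ext y
    have hnorm : ‖(MeasurableEquiv.toLp 2 (Fin 3 → ℝ)) y‖
        = Real.sqrt (y 0^2 + y 1^2 + y 2^2) := by
      simp only [EuclideanSpace.norm_eq, MeasurableEquiv.coe_toLp,
        PiLp.toLp_apply, Real.norm_eq_abs, sq_abs, Fin.sum_univ_three]
    have happ : ((MeasurableEquiv.toLp 2 (Fin 3 → ℝ)) y) 0 = y 0 := rfl
    simp only [mem_preimage, hA', mem_setOf_eq, hnorm, happ]
    have hq : (0:ℝ) ≤ y 0^2 + y 1^2 + y 2^2 := by positivity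
    have hn : Real.sqrt (y 0^2 + y 1^2 + y 2^2) ^ 2 = y 0^2 + y 1^2 + y 2^2 :=
      Real.sq_sqrt hq
    have hn0 : 0 ≤ Real.sqrt (y 0^2 + y 1^2 + y 2^2) := Real.sqrt_nonneg _
    set n := Real.sqrt (y 0^2 + y 1^2 + y 2^2)
    constructor
    · rintro ⟨h1, h2⟩
      have hy0 : 0 ≤ y 0 := le_trans (by positivity) h2
      have hh : (t*n)*(t*n) ≤ y 0 * y 0 :=
        mul_le_mul h2 h2 (mul_nonneg ht0.le hn0) hy0
      refine ⟨by nlinarith, hy0, by nlinarith⟩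
    · rintro ⟨h1, h2, h3⟩
      refine ⟨by nlinarith, ?_⟩
      have hh : (t*n)^2 ≤ (y 0)^2 := by nlinarith
      nlinarith [sq_nonneg (t*n - y 0), sq_nonneg (t*n + y 0), mul_nonneg ht0.le hn0]
  rw [hset]
  exact volume_sectorPi R t hR ht0 ht1

lemma real_aux (X ab c : ℝ) (hab : c*c ≤ ab) (g4 : 0 ≤ 1-c^2)
    (h5 : (X - ab)^2 ≤ (1-c^2)^2) : 2*c^2-1 ≤ X := by nlinarith

lemma volume_ball3 (R : ℝ) (hR : 0 ≤ R) :
    volume (Metric.closedBall (0:EuclideanSpace ℝ (Fin 3)) R)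
      = ENNReal.ofReal (4*Real.pi/3*R^3) := by
  rw [EuclideanSpace.volume_closedBall]
  simp only [Fintype.card_fin]
  have h32 : Real.Gamma ((3:ℕ)/2 + 1) = 3*Real.sqrt Real.pi/4 := by
    rw [show ((3:ℕ):ℝ)/2 + 1 = (3/2:ℝ) + 1 by norm_num, Real.Gamma_add_one (by norm_num),
      show (3/2 : ℝ) = (1/2:ℝ) + 1 by norm_num, Real.Gamma_add_one (by norm_num),
      Real.Gamma_one_half_eq]
    ring
  rw [h32, ← ENNReal.ofReal_pow hR, ← ENNReal.ofReal_mul (by positivity)]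
  congr 1
  have hπ : Real.sqrt Real.pi ^ 3 = Real.pi * Real.sqrt Real.pi := by
    rw [pow_succ, Real.sq_sqrt Real.pi_pos.le]
  rw [hπ]
  have h0 : Real.sqrt Real.pi ≠ 0 := by positivity
  field_simp

lemma inner_ge_of_common {E : Type*} [NormedAddCommGroup E] [InnerProductSpace ℝ E]
    (u w v : E) (hu : ‖u‖ = 1) (hw : ‖w‖ = 1) (hv : ‖v‖ = 1) (c : ℝ) (hc : 0 ≤ c)
    (h1 : c ≤ ⟪u, w⟫) (h2 : c ≤ ⟪u, v⟫) : 2*c^2 - 1 ≤ ⟪w, v⟫ := by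
  set a := ⟪u, w⟫ with ha
  set b := ⟪u, v⟫ with hb
  have ha1 : a ≤ 1 := by
    have := real_inner_le_norm u w; rw [hu, hw] at this; simpa [← ha] using this
  have hb1 : b ≤ 1 := by
    have := real_inner_le_norm u v; rw [hu, hv] at this; simpa [← hb] using this
  have huu : ⟪u, u⟫ = 1 := by
    rw [real_inner_self_eq_norm_sq, hu]; norm_num
  have hCS := real_inner_mul_inner_self_le (w - a • u) (v - b • u)
  have hca : ⟪w, u⟫ = a := (real_inner_comm u w).trans ha.symm
  have hcb : ⟪u, v⟫ = b := hb.symm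
  have hcb' : ⟪v, u⟫ = b := (real_inner_comm u v).trans hb.symm
  have hww : ⟪w, w⟫ = 1 := by rw [real_inner_self_eq_norm_sq, hw]; norm_num
  have hvv : ⟪v, v⟫ = 1 := by rw [real_inner_self_eq_norm_sq, hv]; norm_num
  have hexp : ⟪w - a • u, v - b • u⟫ = ⟪w, v⟫ - a*b := by
    simp only [inner_sub_left, inner_sub_right, real_inner_smul_left, real_inner_smul_right, huu,
      hca, hcb, hcb', hww, hvv]
    ring
  have hnw : ⟪w - a • u, w - a • u⟫ = 1 - a^2 := by
    simp only [inner_sub_left, inner_sub_right, real_inner_smul_left, real_inner_smul_right, huu,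
      hca, hww]
    ring
  have hnv : ⟪v - b • u, v - b • u⟫ = 1 - b^2 := by
    simp only [inner_sub_left, inner_sub_right, real_inner_smul_left, real_inner_smul_right, huu,
      hcb, hcb', hvv]
    ring
  rw [hexp, hnw, hnv] at hCS
  have hab : c*c ≤ a*b := mul_le_mul h1 h2 hc (hc.trans h1)
  have e1 : (1-a^2)*(1-b^2) ≤ (1-c^2)*(1-c^2) := by
    have g1 : 1-a^2 ≤ 1-c^2 := by nlinarith
    have g2 : 1-b^2 ≤ 1-c^2 := by nlinarith
    have g3 : 0 ≤ 1-b^2 := by nlinarith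
    have g4 : 0 ≤ 1-c^2 := by nlinarith
    exact mul_le_mul g1 g2 g3 g4
  have g4 : 0 ≤ 1-c^2 := by nlinarith
  have h5 : (⟪w, v⟫ - a*b)^2 ≤ (1-c^2)^2 := by
    rw [sq, sq]; exact le_trans hCS e1
  exact real_aux _ _ _ hab g4 h5

def SurfCap (R h : ℝ) (v : EuclideanSpace ℝ (Fin 3)) :
    Set (EuclideanSpace ℝ (Fin 3)) :=
  {x | ‖x‖ = R ∧ R - h ≤ ⟪x, v⟫}

theorem maximal_cap_packing_card :
    ∀ R : ℝ, 0 < R → ∀ h : ℝ, 0 < h → h ≤ R →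
      ∀ V : Finset (EuclideanSpace ℝ (Fin 3)),
        (∀ v ∈ V, ‖v‖ = 1) →
        (∀ v ∈ V, ∀ w ∈ V, v ≠ w → SurfCap R h v ∩ SurfCap R h w = ∅) →
        (∀ w : EuclideanSpace ℝ (Fin 3), ‖w‖ = 1 →
          ∃ v ∈ V, (SurfCap R h w ∩ SurfCap R h v).Nonempty) →
        R / (2 * h) ≤ (V.card : ℝ) := by
  intro R hR h hh hhR V hunit _ hmax
  have hVne : V.Nonempty := by
    obtain ⟨v, hv, -⟩ := hmax (EuclideanSpace.single 0 1) (by simp)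
    exact ⟨v, hv⟩
  have hcard1 : (1:ℝ) ≤ V.card := by
    exact_mod_cast Finset.card_pos.mpr hVne
  rcases le_or_gt R (2*h) with hc1 | hc1
  · calc R/(2*h) ≤ 1 := by rw [div_le_one (by positivity)]; linarith
    _ ≤ V.card := hcard1
  have hcard2 : (2:ℝ) ≤ V.card := by
    by_contra hlt
    push_neg at hlt
    have : V.card = 1 := by
      have h2 : V.card < 2 := by exact_mod_cast hlt
      have h1 := Finset.card_pos.mpr hVne
      omega
    obtain ⟨v0, hv0⟩ := Finset.card_eq_one.mp this
    have hv0V : v0 ∈ V := by rw [hv0]; exact Finset.mem_singleton_self v0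
    have hv0n : ‖v0‖ = 1 := hunit v0 hv0V
    obtain ⟨v', hv', x, hx⟩ := hmax (-v0) (by rw [norm_neg]; exact hv0n)
    have hv'e : v' = v0 := by rw [hv0] at hv'; exact Finset.mem_singleton.mp hv'
    obtain ⟨⟨-, hx1⟩, -, hx2⟩ := hx
    rw [inner_neg_right] at hx1
    rw [hv'e] at hx2
    linarith
  rcases le_or_gt R (4*h) with hc2 | hc2
  · calc R/(2*h) ≤ 2 := by rw [div_le_iff₀ (by positivity)]; linarith
    _ ≤ V.card := hcard2
  -- main case
  set c : ℝ := (R - h)/R with hc_def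
  set t : ℝ := 2*c^2 - 1 with ht_def
  have hcR : c * R = R - h := by rw [hc_def, div_mul_cancel₀ _ hR.ne']
  have hc34 : 3/4 ≤ c := by rw [hc_def, le_div_iff₀ hR]; linarith
  have hcle1 : c ≤ 1 := by rw [hc_def, div_le_one hR]; linarith
  have ht0 : 0 < t := by rw [ht_def]; nlinarith
  have ht1 : t ≤ 1 := by rw [ht_def]; nlinarith
  set K : EuclideanSpace ℝ (Fin 3) → Set (EuclideanSpace ℝ (Fin 3)) :=
    fun v => {x | ‖x‖ ≤ R ∧ t * ‖x‖ ≤ ⟪x, v⟫} with hK_def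
  have hcover : Metric.closedBall (0:EuclideanSpace ℝ (Fin 3)) R
      ⊆ {0} ∪ ⋃ v ∈ V, K v := by
    intro x hx
    rcases eq_or_ne x 0 with hx0 | hx0
    · left; simp [hx0]
    right
    have hxn : 0 < ‖x‖ := norm_pos_iff.mpr hx0
    set w := ‖x‖⁻¹ • x with hw_def
    have hwn : ‖w‖ = 1 := norm_smul_inv_norm hx0
    obtain ⟨v, hvV, y, hy⟩ := hmax w hwn
    obtain ⟨⟨hyn, hyw⟩, -, hyv⟩ := hy
    have hRy : 0 < ‖y‖ := by rw [hyn]; exact hR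
    set u := R⁻¹ • y with hu_def
    have hun : ‖u‖ = 1 := by
      rw [hu_def, norm_smul, Real.norm_eq_abs, abs_of_pos (by positivity : (0:ℝ) < R⁻¹), hyn]
      field_simp
    have hcuw : c ≤ ⟪u, w⟫ := by
      rw [hu_def, real_inner_smul_left, hc_def, div_eq_inv_mul]
      exact mul_le_mul_of_nonneg_left hyw (by positivity)
    have hcuv : c ≤ ⟪u, v⟫ := by
      rw [hu_def, real_inner_smul_left, hc_def, div_eq_inv_mul]
      have : R - h ≤ ⟪y, v⟫ := hyv
      exact mul_le_mul_of_nonneg_left this (by positivity)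
    have hwv : t ≤ ⟪w, v⟫ := by
      rw [ht_def]
      exact inner_ge_of_common u w v hun hwn (hunit v hvV) c (by linarith) hcuw hcuv
    refine Set.mem_biUnion hvV ?_
    constructor
    · exact mem_closedBall_zero_iff.mp hx
    · have hxv : ⟪x, v⟫ = ‖x‖ * ⟪w, v⟫ := by
        rw [hw_def, real_inner_smul_left]
        field_simp
      rw [hxv, mul_comm t]
      exact mul_le_mul_of_nonneg_left hwv (norm_nonneg x)
  have h1tnn : (0:ℝ) ≤ 1 - t := by linarith
  have hmeas := measure_mono (μ := (volume : Measure (EuclideanSpace ℝ (Fin 3)))) hcover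
  rw [volume_ball3 R hR.le] at hmeas
  have hstep : volume ({(0:EuclideanSpace ℝ (Fin 3))} ∪ ⋃ v ∈ V, K v)
      ≤ (V.card : ℝ≥0∞) * ENNReal.ofReal (2*Real.pi/3*((1-t)*R^3)) := by
    calc volume ({(0:EuclideanSpace ℝ (Fin 3))} ∪ ⋃ v ∈ V, K v)
        ≤ volume {(0:EuclideanSpace ℝ (Fin 3))} + volume (⋃ v ∈ V, K v) :=
          measure_union_le _ _
      _ = volume (⋃ v ∈ V, K v) := by rw [measure_singleton, zero_add]
      _ ≤ ∑ v ∈ V, volume (K v) := measure_biUnion_finset_le V K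
      _ = (V.card : ℝ≥0∞) * ENNReal.ofReal (2*Real.pi/3*((1-t)*R^3)) := by
          rw [Finset.sum_congr rfl (fun v hv => by
            show volume (K v) = ENNReal.ofReal (2*Real.pi/3*((1-t)*R^3))
            rw [hK_def]
            exact volume_sector R t hR ht0 ht1 v (hunit v hv)),
            Finset.sum_const, nsmul_eq_mul]
  have hEN : ENNReal.ofReal (4*Real.pi/3*R^3)
      ≤ ENNReal.ofReal ((V.card:ℝ) * (2*Real.pi/3*((1-t)*R^3))) := by
    refine le_trans (le_trans hmeas hstep) (le_of_eq ?_)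
    rw [show ((V.card:ℕ):ℝ≥0∞) = ENNReal.ofReal ((V.card:ℝ)) from (ENNReal.ofReal_natCast _).symm,
      ← ENNReal.ofReal_mul (Nat.cast_nonneg _ : (0:ℝ) ≤ ((V.card:ℕ):ℝ))]
  have hreal : 4*Real.pi/3*R^3 ≤ (V.card:ℝ) * (2*Real.pi/3*((1-t)*R^3)) := by
    have hq : (0:ℝ) ≤ (V.card:ℝ) * (2*Real.pi/3*((1-t)*R^3)) :=
      mul_nonneg (Nat.cast_nonneg _)
        (mul_nonneg (by positivity) (mul_nonneg h1tnn (by positivity)))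
    exact (ENNReal.ofReal_le_ofReal_iff hq).mp hEN
  have h1t : 1 - t = 2*(1-c^2) := by rw [ht_def]; ring
  have key : 1 ≤ (V.card:ℝ) * (1-c^2) := by
    have hpos : (0:ℝ) < 4*Real.pi/3*R^3 := by positivity
    have heq : (V.card:ℝ) * (2*Real.pi/3*((1-t)*R^3))
        = (4*Real.pi/3*R^3) * ((V.card:ℝ)*(1-c^2)) := by rw [h1t]; ring
    rw [heq] at hreal
    nlinarith [hreal, hpos]
  have hcc : R*(1-c^2) ≤ 2*h := by
    have hceq : R*(1-c^2) = h*(2*R-h)/R := by rw [hc_def]; field_simp; ring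
    rw [hceq, div_le_iff₀ hR]
    nlinarith
  have hN0 : (0:ℝ) ≤ (V.card:ℝ) := Nat.cast_nonneg _
  rw [div_le_iff₀ (by positivity : (0:ℝ) < 2*h)]
  nlinarith [key, hcc, hN0, hR, mul_le_mul_of_nonneg_left hcc hN0]
end
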